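/- Let E : B → A be a conditional expectation with Index E = 2. Then for every b ∈ B, (1−e_A) b (1−e_A) = E(b)(1−e_A) in the C*-basic construction C*⟨B, e_A⟩. -/
import Mathlib


/- Watatani-style conditional expectations, quasi-bases, and the C*-basic
construction, formalized abstractly. -/

noncomputable section

/-- A conditional expectation of a unital C*-algebra `B` onto a C*-subalgebra `A`. -/
structure CondExp (B : Type*) [NormedRing B] [StarRing B] [NormedAlgebra ℂ B] [StarModule ℂ B]
    (A : StarSubalgebra ℂ B) where
  toFun : B →ₗ[ℂ] B
  mem_range : ∀ b, toFun b ∈ A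
  fixes : ∀ a ∈ A, toFun a = a
  left_mod : ∀ a ∈ A, ∀ b, toFun (a * b) = a * toFun b
  right_mod : ∀ a ∈ A, ∀ b, toFun (b * a) = toFun b * a
  star_map : ∀ b, toFun (star b) = star (toFun b)
  pos : ∀ b, ∃ c, toFun (star b * b) = star c * c

/-- `x` is a quasi-basis for the conditional expectation `E` (with pairs `(x i, (x i)*)`). -/
def IsQuasiBasis {B : Type*} [NormedRing B] [StarRing B] [NormedAlgebra ℂ B] [StarModule ℂ B]
    {A : StarSubalgebra ℂ B} (E : CondExp B A) {n : ℕ} (x : Fin n → B) : Prop :=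
  (∀ b, ∑ i, x i * E.toFun (star (x i) * b) = b) ∧
  (∀ b, ∑ i, E.toFun (b * x i) * star (x i) = b)

/-- The C*-basic construction `C = C*⟨B, e_A⟩` of a conditional expectation `E : B → A`,
with Jones projection `e`. -/
structure BasicConstruction {B : Type*} [NormedRing B] [StarRing B] [NormedAlgebra ℂ B] [StarModule ℂ B]
    {A : StarSubalgebra ℂ B} (E : CondExp B A)
    (C : Type*) [NormedRing C] [StarRing C] [NormedAlgebra ℂ C] [StarModule ℂ C] where
  ι : B →⋆ₐ[ℂ] C
  inj : Function.Injective ι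
  e : C
  e_star : star e = e
  e_idem : e * e = e
  jones : ∀ b, e * ι b * e = ι (E.toFun b) * e
  dense : (Submodule.span ℂ {y : C | ∃ b c : B, y = ι b * e * ι c}).topologicalClosure = ⊤
  mul_e_inj : ∀ b : B, ι b * e = 0 → b = 0

section AuxB

variable {B : Type*} [NormedRing B] [StarRing B] [NormedAlgebra ℂ B] [StarModule ℂ B]
  {A : StarSubalgebra ℂ B} (E : CondExp B A)

lemma CondExp.one' : E.toFun 1 = 1 := E.fixes 1 (one_mem A)
lemma CondExp.idem (b : B) : E.toFun (E.toFun b) = E.toFun b := E.fixes _ (E.mem_range b)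
lemma CondExp.left_mod' (b m : B) : E.toFun (E.toFun b * m) = E.toFun b * E.toFun m :=
  E.left_mod _ (E.mem_range b) m
lemma CondExp.right_mod' (b m : B) : E.toFun (m * E.toFun b) = E.toFun m * E.toFun b :=
  E.right_mod _ (E.mem_range b) m

variable {n : ℕ} {x : Fin n → B} (hx : IsQuasiBasis E x)
  (hidx : ∑ i, x i * star (x i) = (2 : B))

section
include hx

/-- (a) -/
lemma qb1 : ∑ i, x i * E.toFun (star (x i)) = 1 := by
  have h := hx.1 1
  simpa using h

/-- (b) -/
lemma qb2 : ∑ i, E.toFun (x i) * star (x i) = 1 := by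
  have h := hx.2 1
  simpa using h

/-- a = 1 -/
lemma qbA : ∑ i, E.toFun (x i) * E.toFun (star (x i)) = 1 := by
  have h := congrArg E.toFun (qb2 E hx)
  rw [map_sum, E.one'] at h
  simp only [E.left_mod'] at h
  exact h

/-- applying E to quasibasis 1 -/
lemma qbE (m : B) : ∑ i, E.toFun (x i) * E.toFun (star (x i) * m) = E.toFun m := by
  have h := congrArg E.toFun (hx.1 m)
  rw [map_sum] at h
  simp only [E.right_mod'] at h
  exact h

lemma qbE' (m : B) : ∑ i, E.toFun (m * x i) * E.toFun (star (x i)) = E.toFun m := by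
  have h := congrArg E.toFun (hx.2 m)
  rw [map_sum] at h
  simp only [E.left_mod'] at h
  exact h

lemma star_y (i : Fin n) :
    star (x i - E.toFun (x i)) = star (x i) - E.toFun (star (x i)) := by
  rw [star_sub, E.star_map]

/-- (⋆) -/
lemma hstar1 (m : B) :
    ∑ i, (x i - E.toFun (x i)) * E.toFun (star (x i - E.toFun (x i)) * m)
      = m - E.toFun m := by
  have expand : ∀ i : Fin n,
      (x i - E.toFun (x i)) * E.toFun (star (x i - E.toFun (x i)) * m)
        = (x i * E.toFun (star (x i) * m) - x i * E.toFun (star (x i)) * E.toFun m)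
          - (E.toFun (x i) * E.toFun (star (x i) * m)
              - E.toFun (x i) * E.toFun (star (x i)) * E.toFun m) := by
    intro i
    simp only [star_sub, ← E.star_map, sub_mul, mul_sub, map_sub,
      E.left_mod', E.right_mod', mul_assoc]
    abel
  rw [Finset.sum_congr rfl (fun i _ => expand i), Finset.sum_sub_distrib,
    Finset.sum_sub_distrib, Finset.sum_sub_distrib, ← Finset.sum_mul, ← Finset.sum_mul,
    hx.1 m, qb1 E hx, qbE E hx m, qbA E hx, one_mul]
  abel

/-- (⋆') -/
lemma hstar2 (m : B) :
    ∑ i, E.toFun (m * (x i - E.toFun (x i))) * star (x i - E.toFun (x i))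
      = m - E.toFun m := by
  have expand : ∀ i : Fin n,
      E.toFun (m * (x i - E.toFun (x i))) * star (x i - E.toFun (x i))
        = (E.toFun (m * x i) * star (x i) - E.toFun (m * x i) * E.toFun (star (x i)))
          - (E.toFun m * (E.toFun (x i) * star (x i))
              - E.toFun m * (E.toFun (x i) * E.toFun (star (x i)))) := by
    intro i
    simp only [star_sub, ← E.star_map, sub_mul, mul_sub, map_sub,
      E.left_mod', E.right_mod', mul_assoc]
    abel
  rw [Finset.sum_congr rfl (fun i _ => expand i), Finset.sum_sub_distrib,
    Finset.sum_sub_distrib, Finset.sum_sub_distrib, ← Finset.mul_sum, ← Finset.mul_sum,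
    hx.2 m, qbE' E hx m, qb2 E hx, qbA E hx, mul_one]
  abel

end

section
include hx hidx

/-- index of y is 1 -/
lemma yidx : ∑ i, (x i - E.toFun (x i)) * star (x i - E.toFun (x i)) = 1 := by
  have expand : ∀ i : Fin n,
      (x i - E.toFun (x i)) * star (x i - E.toFun (x i))
        = (x i * star (x i) - x i * E.toFun (star (x i)))
          - (E.toFun (x i) * star (x i) - E.toFun (x i) * E.toFun (star (x i))) := by
    intro i
    simp only [star_sub, ← E.star_map, sub_mul, mul_sub]
    abel
  rw [Finset.sum_congr rfl (fun i _ => expand i), Finset.sum_sub_distrib,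
    Finset.sum_sub_distrib, Finset.sum_sub_distrib,
    hidx, qb1 E hx, qb2 E hx, qbA E hx]
  norm_num

end

section
variable [CStarRing B] [CompleteSpace B]
include hx hidx

lemma KK_mem (hfaith : ∀ b : B, E.toFun (star b * b) = 0 → b = 0)
    (c : B) (hc : E.toFun c = 0) (i : Fin n) :
    star (x i - E.toFun (x i)) * c = E.toFun (star (x i - E.toFun (x i)) * c) := by
  classical
  set y : Fin n → B := fun i => x i - E.toFun (x i) with hy
  set d : Fin n → B := fun i => star (y i) * c - E.toFun (star (y i) * c) with hd
  have hstarc : E.toFun (star c) = 0 := by rw [E.star_map, hc, star_zero]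
  have hstard : ∀ i, star (d i) = star c * y i - E.toFun (star c * y i) := by
    intro i
    simp only [hd, star_sub, star_mul, star_star, ← E.star_map]
  have expand : ∀ i : Fin n, star (d i) * d i
      = (star c * (y i * star (y i)) * c - star c * (y i * E.toFun (star (y i) * c)))
        - (E.toFun (star c * y i) * star (y i) * c
            - E.toFun (star c * y i * E.toFun (star (y i) * c))) := by
    intro i
    rw [hstard i, hd]
    simp only [sub_mul, mul_sub]
    rw [← E.right_mod']
    simp only [mul_assoc]
    abel
  have sum1 : ∑ i, star (d i) * d i = E.toFun (star c * c) - star c * c := by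
    rw [Finset.sum_congr rfl (fun i _ => expand i), Finset.sum_sub_distrib,
      Finset.sum_sub_distrib, Finset.sum_sub_distrib]
    have e1 : ∑ i, star c * (y i * star (y i)) * c = star c * c := by
      rw [← Finset.sum_mul, ← Finset.mul_sum, yidx E hx hidx, mul_one]
    have e2 : ∑ i, star c * (y i * E.toFun (star (y i) * c)) = star c * c := by
      rw [← Finset.mul_sum, hstar1 E hx c, hc, sub_zero]
    have e3 : ∑ i, E.toFun (star c * y i) * star (y i) * c = star c * c := by
      rw [← Finset.sum_mul, hstar2 E hx (star c), hstarc, sub_zero]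
    have e4 : ∑ i, E.toFun (star c * y i * E.toFun (star (y i) * c))
        = E.toFun (star c * c) := by
      rw [← map_sum]
      congr 1
      calc ∑ i, star c * y i * E.toFun (star (y i) * c)
          = star c * ∑ i, y i * E.toFun (star (y i) * c) := by
            rw [Finset.mul_sum]; simp only [mul_assoc]
        _ = star c * c := by rw [hstar1 E hx c, hc, sub_zero]
    rw [e1, e2, e3, e4]
    abel
  have hsum0 : ∑ i, E.toFun (star (d i) * d i) = 0 := by
    rw [← map_sum, sum1, map_sub, E.idem, sub_self]
  have hdz : ∀ i, d i = 0 := by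
    choose f hf using fun i => E.pos (d i)
    rw [Finset.sum_congr rfl (fun i _ => hf i)] at hsum0
    letI : CStarAlgebra B := ⟨⟩
    letI := CStarAlgebra.spectralOrder B
    haveI := CStarAlgebra.spectralOrderedRing B
    intro i
    have hz : star (f i) * f i = 0 :=
      (Finset.sum_eq_zero_iff_of_nonneg
        (fun j _ => star_mul_self_nonneg (f j))).mp hsum0 i (Finset.mem_univ i)
    exact hfaith _ (by rw [hf i, hz])
  exact sub_eq_zero.mp (hdz i)

lemma keyL (hfaith : ∀ b : B, E.toFun (star b * b) = 0 → b = 0)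
    (c : B) (hc : E.toFun c = 0) (m : B) :
    c * m = E.toFun (c * m) + c * E.toFun m := by
  classical
  set y : Fin n → B := fun i => x i - E.toFun (x i) with hy
  set m0 := m - E.toFun m with hm0
  have hm0z : E.toFun m0 = 0 := by rw [hm0, map_sub, E.idem, sub_self]
  have hKA : ∀ i, star (y i) * m0 = E.toFun (star (y i) * m0) :=
    fun i => KK_mem E hx hidx hfaith m0 hm0z i
  have hc' : c = ∑ i, E.toFun (c * y i) * star (y i) := by
    have h := hstar2 E hx c
    rw [hc, sub_zero] at h
    exact h.symm
  have step1 : c * m0 = ∑ i, E.toFun (c * y i) * E.toFun (star (y i) * m0) := by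
    calc c * m0 = (∑ i, E.toFun (c * y i) * star (y i)) * m0 := by rw [← hc']
      _ = ∑ i, E.toFun (c * y i) * (star (y i) * m0) := by
          rw [Finset.sum_mul]; simp only [mul_assoc]
      _ = ∑ i, E.toFun (c * y i) * E.toFun (star (y i) * m0) := by
          exact Finset.sum_congr rfl fun i _ => by rw [← hKA i]
  have step2 : E.toFun (c * m0) = c * m0 := by
    rw [step1, map_sum]
    refine Finset.sum_congr rfl fun i _ => ?_
    rw [E.left_mod', E.idem]
  have hsplit : c * m = c * m0 + c * E.toFun m := by
    rw [hm0, mul_sub]; abel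
  have hEsplit : E.toFun (c * m) = c * m0 := by
    rw [hsplit, map_add, step2, E.right_mod', hc, zero_mul, add_zero]
  rw [hEsplit, ← hsplit]

end

end AuxB

section AuxC

variable {B : Type*} [NormedRing B] [StarRing B] [NormedAlgebra ℂ B] [StarModule ℂ B]
  {A : StarSubalgebra ℂ B} {E : CondExp B A}
  {C : Type*} [NormedRing C] [StarRing C] [CStarRing C] [NormedAlgebra ℂ C] [StarModule ℂ C]
  (bc : BasicConstruction E C)

lemma BasicConstruction.comm_e (a : B) (ha : a ∈ A) : bc.e * bc.ι a = bc.ι a * bc.e := by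
  have h1 : bc.e * bc.ι a * bc.e = bc.ι a * bc.e := by rw [bc.jones a, E.fixes a ha]
  have h2 : bc.e * bc.ι (star a) * bc.e = bc.ι (star a) * bc.e := by
    rw [bc.jones, E.fixes _ (star_mem ha)]
  calc bc.e * bc.ι a = star (bc.ι (star a) * bc.e) := by
        simp [star_mul, bc.e_star, map_star, star_star]
    _ = star (bc.e * bc.ι (star a) * bc.e) := by rw [← h2]
    _ = bc.e * bc.ι a * bc.e := by simp [star_mul, bc.e_star, map_star, star_star, mul_assoc]
    _ = bc.ι a * bc.e := h1

include bc in
lemma BasicConstruction.faithful : ∀ b : B, E.toFun (star b * b) = 0 → b = 0 := by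
  intro b hb
  have hz : star (bc.ι b * bc.e) * (bc.ι b * bc.e) = 0 := by
    calc star (bc.ι b * bc.e) * (bc.ι b * bc.e)
        = bc.e * bc.ι (star b * b) * bc.e := by
          simp only [star_mul, bc.e_star, map_star, map_mul, star_star]
          simp only [mul_assoc, bc.e_idem]
      _ = bc.ι (E.toFun (star b * b)) * bc.e := bc.jones _
      _ = 0 := by rw [hb, map_zero, zero_mul]
  have hn : ‖bc.ι b * bc.e‖ = 0 := by
    have h := CStarRing.norm_star_mul_self (x := bc.ι b * bc.e)
    rw [hz, norm_zero] at h
    exact mul_self_eq_zero.mp h.symm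
  exact bc.mul_e_inj b (norm_eq_zero.mp hn)

lemma BasicConstruction.zero_of_ann (w : C)
    (hw : ∀ b c : B, w * (bc.ι b * bc.e * bc.ι c) = 0) : w = 0 := by
  set S : Submodule ℂ C := LinearMap.ker (LinearMap.mulLeft ℂ w) with hS
  have hclosed : IsClosed (S : Set C) := by
    have : (S : Set C) = (fun z => w * z) ⁻¹' {0} := by
      ext z
      simp [hS, LinearMap.mem_ker]
    rw [this]
    exact isClosed_singleton.preimage (continuous_const.mul continuous_id)
  have hsub : Submodule.span ℂ {y : C | ∃ b c : B, y = bc.ι b * bc.e * bc.ι c} ≤ S := by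
    rw [Submodule.span_le]
    rintro z ⟨b, c, rfl⟩
    simp only [SetLike.mem_coe, hS, LinearMap.mem_ker, LinearMap.mulLeft_apply]
    exact hw b c
  have htop : (⊤ : Submodule ℂ C) ≤ S := by
    rw [← bc.dense]
    exact Submodule.topologicalClosure_minimal _ hsub hclosed
  have h1 : (1 : C) ∈ S := htop trivial
  simpa [hS, LinearMap.mem_ker] using h1

end AuxC

/-- if Index E = 2 then `(1−e_A) b (1−e_A) = E(b)(1−e_A)` for all `b ∈ B`. -/
theorem corner_compress_eq_expectation
    {B C : Type*} [NormedRing B] [StarRing B] [CStarRing B] [NormedAlgebra ℂ B]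
    [StarModule ℂ B] [CompleteSpace B]
    [NormedRing C] [StarRing C] [CStarRing C] [NormedAlgebra ℂ C]
    [StarModule ℂ C] [CompleteSpace C]
    {A : StarSubalgebra ℂ B} (E : CondExp B A)
    {n : ℕ} (x : Fin n → B) (hx : IsQuasiBasis E x)
    (hidx : ∑ i, x i * star (x i) = (2 : B))
    (bc : BasicConstruction E C)
    (Et : C →ₗ[ℂ] B)
    (hEt : ∀ b c : B, Et (bc.ι b * bc.e * bc.ι c) = ((2 : ℂ))⁻¹ • (b * c))
    :
    ∀ b : B, (1 - bc.e) * bc.ι b * (1 - bc.e) = bc.ι (E.toFun b) * (1 - bc.e) := by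
  intro b
  have hfaith := bc.faithful
  set c : B := b - E.toFun b with hcdef
  have hc : E.toFun c = 0 := by rw [hcdef, map_sub, E.idem, sub_self]
  have hL := keyL E hx hidx hfaith c hc
  set w : C := bc.ι c - bc.ι c * bc.e - bc.e * bc.ι c with hwdef
  have hann : ∀ m m' : B, w * (bc.ι m * bc.e * bc.ι m') = 0 := by
    intro m m'
    have h1 : w * (bc.ι m * bc.e) = 0 := by
      have expand : w * (bc.ι m * bc.e)
          = bc.ι (c * m) * bc.e - bc.ι c * (bc.e * bc.ι m * bc.e)
            - bc.e * bc.ι (c * m) * bc.e := by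
        rw [hwdef]
        simp only [sub_mul, map_mul]
        simp only [mul_assoc]
      rw [expand, bc.jones m, bc.jones (c * m)]
      have : bc.ι c * (bc.ι (E.toFun m) * bc.e) = bc.ι (c * E.toFun m) * bc.e := by
        rw [map_mul, mul_assoc]
      rw [this]
      have hz : c * m - c * E.toFun m - E.toFun (c * m) = 0 := by
        nth_rewrite 1 [hL m]
        abel
      calc bc.ι (c * m) * bc.e - bc.ι (c * E.toFun m) * bc.e
            - bc.ι (E.toFun (c * m)) * bc.e
          = bc.ι (c * m - c * E.toFun m - E.toFun (c * m)) * bc.e := by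
            simp only [map_sub, sub_mul]
        _ = 0 := by rw [hz, map_zero, zero_mul]
    calc w * (bc.ι m * bc.e * bc.ι m') = (w * (bc.ι m * bc.e)) * bc.ι m' := by
          simp only [mul_assoc]
      _ = 0 := by rw [h1, zero_mul]
  have hw0 : w = 0 := bc.zero_of_ann w hann
  have hb : bc.ι b = bc.ι (E.toFun b) + bc.ι c := by
    rw [← map_add]
    congr 1
    rw [hcdef]
    abel
  have hcomm := bc.comm_e (E.toFun b) (E.mem_range b)
  calc (1 - bc.e) * bc.ι b * (1 - bc.e)
      = bc.ι b - bc.e * bc.ι b - bc.ι b * bc.e + bc.e * bc.ι b * bc.e := by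
        noncomm_ring
    _ = bc.ι b - bc.e * bc.ι b - bc.ι b * bc.e + bc.ι (E.toFun b) * bc.e := by
        rw [bc.jones b]
    _ = (bc.ι (E.toFun b) - bc.ι (E.toFun b) * bc.e)
          + (bc.ι c - bc.ι c * bc.e - bc.e * bc.ι c) := by
        rw [hb, mul_add, add_mul, hcomm]
        abel
    _ = bc.ι (E.toFun b) * (1 - bc.e) := by
        rw [← hwdef, hw0, add_zero, mul_sub, mul_one]

end
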